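/- Let R be a commutative ring with identity, let k be a non-negative integer and let p = 4k+3 be prime. For all a, b, c in R, the quadratic residue circulant matrix satisfies Q_p(a,b,c) · Q_p(a,b,c)^T = Q_p( a² + (2k+1)(b² + c²), ab + ac + k(b² + c²) + (2k+1)bc, ab + ac + k(b² + c²) + (2k+1)bc ). -/

import Mathlib

noncomputable section

open Matrix
open scoped Classical

/-- The quadratic residue circulant matrix `Q_p(a,b,c)`: the `p × p` circulant matrix
(indexed by `ZMod p`) whose `(i,j)` entry is `a` if `j - i = 0`, `b` if `j - i` is a
nonzero quadratic residue modulo `p`, and `c` if `j - i` is a quadratic non-residue. -/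
def Qcirc {R : Type*} [CommRing R] (p : ℕ) (a b c : R) :
    Matrix (ZMod p) (ZMod p) R :=
  Matrix.of fun i j =>
    if j - i = 0 then a else if IsSquare (j - i) then b else c

section QcircAux

open Finset

variable {F : Type*} [Field F] [Fintype F] [DecidableEq F]

private lemma aux_jacobi (hF : ringChar F ≠ 2) {d : F} (hd : d ≠ 0) :
    ∑ x : F, quadraticChar F x * quadraticChar F (x + d) = -1 := by
  have h1 : ∑ x : F, quadraticChar F x * quadraticChar F (x + d)
      = ∑ x ∈ univ.erase (0 : F), quadraticChar F x * quadraticChar F (x + d) := by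
    rw [← Finset.add_sum_erase _ _ (mem_univ (0 : F))]
    simp
  have h2 : ∑ x ∈ univ.erase (0 : F), quadraticChar F x * quadraticChar F (x + d)
      = ∑ x ∈ univ.erase (0 : F), quadraticChar F (1 + d * x⁻¹) := by
    refine Finset.sum_congr rfl fun x hx => ?_
    have hx0 : x ≠ 0 := by simpa using (Finset.mem_erase.mp hx).1
    have : x + d = x * (1 + d * x⁻¹) := by field_simp
    rw [this, _root_.map_mul, ← mul_assoc, ← _root_.map_mul]
    rw [show x * x = x ^ 2 by ring, quadraticChar_sq_one' hx0, one_mul]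
  have h3 : ∑ x ∈ univ.erase (0 : F), quadraticChar F (1 + d * x⁻¹)
      = ∑ y ∈ univ.erase (1 : F), quadraticChar F y := by
    refine Finset.sum_nbij' (fun x => 1 + d * x⁻¹) (fun y => d * (y - 1)⁻¹) ?_ ?_ ?_ ?_ ?_
    · intro x hx
      have hx0 : x ≠ 0 := by simpa using (Finset.mem_erase.mp hx).1
      simp only [mem_erase, mem_univ, and_true]
      intro h
      have : d * x⁻¹ = 0 := by linear_combination h
      simp [hd, hx0] at this
    · intro y hy
      have hy1 : y ≠ 1 := by simpa using (Finset.mem_erase.mp hy).1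
      simp only [mem_erase, mem_univ, and_true]
      have : y - 1 ≠ 0 := sub_ne_zero.mpr hy1
      simp [hd, this]
    · intro x hx
      have hx0 : x ≠ 0 := by simpa using (Finset.mem_erase.mp hx).1
      field_simp
      simp [hd]
    · intro y hy
      have hy1 : y ≠ 1 := by simpa using (Finset.mem_erase.mp hy).1
      have : y - 1 ≠ 0 := sub_ne_zero.mpr hy1
      field_simp
      ring
    · intro x hx; rfl
  have h4 := quadraticChar_sum_zero hF
  rw [← Finset.add_sum_erase _ _ (mem_univ (1 : F))] at h4
  simp only [_root_.map_one] at h4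
  rw [h1, h2, h3]
  linarith

private lemma aux_sq_count (hF : ringChar F ≠ 2) :
    (2 : ℤ) * ((univ.erase (0 : F)).filter (fun u => IsSquare u)).card
      = (Fintype.card F : ℤ) - 1 := by
  have key : ∑ u ∈ univ.erase (0 : F), (1 + quadraticChar F u)
      = (Fintype.card F : ℤ) - 1 := by
    rw [Finset.sum_add_distrib, Finset.sum_const]
    have h1 : (univ.erase (0 : F)).card = Fintype.card F - 1 := by
      rw [Finset.card_erase_of_mem (mem_univ _), Finset.card_univ]
    have h2 : ∑ u ∈ univ.erase (0 : F), quadraticChar F u = 0 := by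
      have h := Finset.add_sum_erase univ (fun u => quadraticChar F u) (mem_univ (0 : F))
      rw [quadraticChar_sum_zero hF] at h
      simpa using h
    rw [h2, h1]
    have : (1 : ℕ) ≤ Fintype.card F := Fintype.card_pos
    simp only [nsmul_eq_mul, mul_one, add_zero]
    omega
  have key2 : ∑ u ∈ univ.erase (0 : F), (1 + quadraticChar F u)
      = 2 * ((univ.erase (0 : F)).filter (fun u => IsSquare u)).card := by
    have : ∀ u ∈ univ.erase (0 : F),
        (1 + quadraticChar F u) = if IsSquare u then (2 : ℤ) else 0 := by
      intro u hu
      have hu0 : u ≠ 0 := by simpa using (Finset.mem_erase.mp hu).1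
      rcases quadraticChar_dichotomy hu0 with h | h
      · rw [if_pos ((quadraticChar_one_iff_isSquare hu0).mp h), h]; norm_num
      · rw [if_neg (by rw [← quadraticChar_neg_one_iff_not_isSquare]; exact h), h]; norm_num
    rw [Finset.sum_congr rfl this, Finset.sum_ite, Finset.sum_const, Finset.sum_const_zero]
    push_cast; ring
  linarith [key, key2]

private lemma aux_pair_count (hF : ringChar F ≠ 2)
    (hm1 : quadraticChar F (-1) = -1) {d : F} (hd : d ≠ 0)
    {ε : ℤ} (hε : ε = 1 ∨ ε = -1) :
    (4 : ℤ) * (((univ.erase (0 : F)).erase (-d)).filter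
        (fun u => quadraticChar F u = ε ∧ quadraticChar F (u + d) = ε)).card
      = (Fintype.card F : ℤ) - 3 := by
  set χ := quadraticChar F with hχ
  set S := (univ.erase (0 : F)).erase (-d) with hS
  have hmd : (-d) ∈ univ.erase (0 : F) := by
    simp [Finset.mem_erase, neg_ne_zero.mpr hd]
  have hsplit : ∀ f : F → ℤ, ∑ u ∈ S, f u = (∑ u : F, f u) - f 0 - f (-d) := by
    intro f
    have e1 := Finset.add_sum_erase univ f (mem_univ (0 : F))
    have e2 := Finset.add_sum_erase _ f hmd
    rw [hS]; linarith
  have hScard : (S.card : ℤ) = (Fintype.card F : ℤ) - 2 := by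
    rw [hS, Finset.card_erase_of_mem hmd, Finset.card_erase_of_mem (mem_univ _),
      Finset.card_univ]
    have h2 : (2 : ℕ) ≤ Fintype.card F := by
      have := Finset.card_le_card (Finset.subset_univ {(0 : F), -d})
      rwa [Finset.card_pair (by simpa [eq_comm] using neg_ne_zero.mpr hd), Finset.card_univ] at this
    push_cast [Nat.sub_sub, h2]
    ring
  have hmem0 : ∀ u ∈ S, u ≠ 0 := fun u hu => by
    have := Finset.mem_erase.mp (Finset.mem_erase.mp hu).2
    exact this.1
  have hmemd : ∀ u ∈ S, u + d ≠ 0 := fun u hu => by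
    have h := (Finset.mem_erase.mp hu).1
    intro hcon
    exact h (by linear_combination hcon)
  have hε2 : ε * ε = 1 := by rcases hε with rfl | rfl <;> norm_num
  -- step A: sum equals 4 * card
  have stepA : ∑ u ∈ S, (1 + ε * χ u) * (1 + ε * χ (u + d))
      = 4 * (S.filter (fun u => χ u = ε ∧ χ (u + d) = ε)).card := by
    have hterm : ∀ u ∈ S, (1 + ε * χ u) * (1 + ε * χ (u + d))
        = if (χ u = ε ∧ χ (u + d) = ε) then (4 : ℤ) else 0 := by
      intro u hu
      rcases quadraticChar_dichotomy (hmem0 u hu) with h1 | h1 <;>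
        rcases quadraticChar_dichotomy (hmemd u hu) with h2 | h2 <;>
        rcases hε with rfl | rfl <;>
        simp [hχ, h1, h2] <;> norm_num
    rw [Finset.sum_congr rfl hterm, Finset.sum_ite, Finset.sum_const, Finset.sum_const_zero]
    push_cast; ring
  -- step B: sum equals card F - 3
  have hnegd : χ (-d) = -χ d := by
    rw [show (-d : F) = -1 * d by ring, _root_.map_mul, hm1]; ring
  have s2 : ∑ u ∈ S, χ u = -χ (-d) := by
    rw [hsplit, show ∑ u : F, χ u = 0 from quadraticChar_sum_zero hF,
      show χ (0 : F) = 0 from quadraticChar_zero]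
    ring
  have s3 : ∑ u ∈ S, χ (u + d) = -χ d := by
    rw [hsplit]
    have : ∑ u : F, χ (u + d) = ∑ y : F, χ y :=
      Fintype.sum_equiv (Equiv.addRight d) _ _ (fun u => rfl)
    rw [show ∑ u : F, χ (u + d) = 0 from this.trans (quadraticChar_sum_zero hF),
      show χ ((0 : F) + d) = χ d from by rw [zero_add],
      show χ ((-d : F) + d) = 0 from by rw [neg_add_cancel]; exact quadraticChar_zero]
    ring
  have s4 : ∑ u ∈ S, χ u * χ (u + d) = -1 := by
    rw [hsplit, show ∑ u : F, χ u * χ (u + d) = -1 from aux_jacobi hF hd,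
      show χ (0 : F) = 0 from quadraticChar_zero,
      show χ ((-d : F) + d) = 0 from by rw [neg_add_cancel]; exact quadraticChar_zero]
    ring
  have stepB : ∑ u ∈ S, (1 + ε * χ u) * (1 + ε * χ (u + d))
      = (Fintype.card F : ℤ) - 3 := by
    have expand : ∀ u, (1 + ε * χ u) * (1 + ε * χ (u + d))
        = 1 + ε * χ u + ε * χ (u + d) + (ε * ε) * (χ u * χ (u + d)) := by
      intro u; ring
    simp only [expand, hε2, one_mul]
    rw [Finset.sum_add_distrib, Finset.sum_add_distrib, Finset.sum_add_distrib,
      ← Finset.mul_sum, ← Finset.mul_sum, s2, s3, s4, hnegd, Finset.sum_const]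
    simp only [nsmul_eq_mul, mul_one]
    ring_nf
    ring_nf at hScard
    linarith [hScard]
  linarith [stepA, stepB]

private lemma aux_key {R : Type*} [CommRing R] (k : ℕ) (hp : Nat.Prime (4 * k + 3))
    (a b c : R) (d : ZMod (4 * k + 3)) :
    ∑ u : ZMod (4 * k + 3),
        (if u + d = 0 then a else if IsSquare (u + d) then b else c) *
          (if u = 0 then a else if IsSquare u then b else c)
      = if d = 0 then a ^ 2 + (2 * (k : R) + 1) * (b ^ 2 + c ^ 2)
        else a * b + a * c + (k : R) * (b ^ 2 + c ^ 2) + (2 * (k : R) + 1) * (b * c) := by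
  haveI : Fact (Nat.Prime (4 * k + 3)) := ⟨hp⟩
  have hF : ringChar (ZMod (4 * k + 3)) ≠ 2 := by
    rw [ZMod.ringChar_zmod_n]; omega
  have hcard : (Fintype.card (ZMod (4 * k + 3)) : ℤ) = 4 * k + 3 := by
    rw [ZMod.card]; push_cast; ring
  have hm1 : quadraticChar (ZMod (4 * k + 3)) (-1) = -1 := by
    rw [quadraticChar_neg_one_iff_not_isSquare, ZMod.exists_sq_eq_neg_one_iff]
    simp only [not_not]
    omega
  by_cases hd : d = 0
  · -- diagonal case
    subst hd
    rw [if_pos rfl]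
    set g : ZMod (4 * k + 3) → R := fun u =>
      (if u + 0 = 0 then a else if IsSquare (u + 0) then b else c) *
        (if u = 0 then a else if IsSquare u then b else c) with hg
    show ∑ u, g u = _
    rw [← Finset.add_sum_erase univ g (mem_univ (0 : ZMod (4 * k + 3)))]
    have hg0 : g 0 = a * a := by simp [hg]
    have hterm : ∀ u ∈ univ.erase (0 : ZMod (4 * k + 3)),
        g u = c * c + (if IsSquare u then b * b - c * c else 0) := by
      intro u hu
      have hu0 : u ≠ 0 := by simpa using (Finset.mem_erase.mp hu).1
      rw [hg]
      simp only [add_zero, if_neg hu0]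
      split_ifs <;> ring
    rw [hg0, Finset.sum_congr rfl hterm, Finset.sum_add_distrib, Finset.sum_const,
      Finset.sum_ite, Finset.sum_const, Finset.sum_const_zero, add_zero]
    have hsq : (((univ.erase (0 : ZMod (4 * k + 3))).filter
        (fun u => IsSquare u)).card : ℤ) = 2 * k + 1 := by
      have := aux_sq_count (F := ZMod (4 * k + 3)) hF
      rw [hcard] at this
      omega
    have hsq' : ((univ.erase (0 : ZMod (4 * k + 3))).filter
        (fun u => IsSquare u)).card = 2 * k + 1 := by exact_mod_cast hsq
    have hce : (univ.erase (0 : ZMod (4 * k + 3))).card = 4 * k + 2 := by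
      rw [Finset.card_erase_of_mem (mem_univ _), Finset.card_univ, ZMod.card]
      omega
    rw [hsq', hce]
    simp only [nsmul_eq_mul]
    push_cast
    ring
  · -- off-diagonal case
    rw [if_neg hd]
    have hmd : (-d) ∈ univ.erase (0 : ZMod (4 * k + 3)) := by
      simp [Finset.mem_erase, neg_ne_zero.mpr hd]
    set S := (univ.erase (0 : ZMod (4 * k + 3))).erase (-d) with hS
    set g : ZMod (4 * k + 3) → R := fun u =>
      (if u + d = 0 then a else if IsSquare (u + d) then b else c) *
        (if u = 0 then a else if IsSquare u then b else c) with hg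
    show ∑ u, g u = _
    have hsplit : ∑ u ∈ S, g u = (∑ u, g u) - g 0 - g (-d) := by
      have e1 := Finset.add_sum_erase univ g (mem_univ (0 : ZMod (4 * k + 3)))
      have e2 := Finset.add_sum_erase _ g hmd
      rw [← hS] at e2
      linear_combination e1 + e2
    -- the two special terms
    have hdsq : IsSquare d ↔ ¬ IsSquare (-d) := by
      constructor
      · intro h hne
        have h1 : quadraticChar (ZMod (4 * k + 3)) d = 1 := (quadraticChar_one_iff_isSquare hd).mpr h
        have h2 : quadraticChar (ZMod (4 * k + 3)) (-d) = 1 := (quadraticChar_one_iff_isSquare (neg_ne_zero.mpr hd)).mpr hne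
        rw [show (-d : ZMod (4 * k + 3)) = -1 * d by ring, _root_.map_mul, hm1, h1] at h2
        norm_num at h2
      · intro h
        have h2 : quadraticChar (ZMod (4 * k + 3)) (-d) = -1 := quadraticChar_neg_one_iff_not_isSquare.mpr h
        rw [show (-d : ZMod (4 * k + 3)) = -1 * d by ring, _root_.map_mul, hm1] at h2
        have h1 : quadraticChar (ZMod (4 * k + 3)) d = 1 := by linarith
        exact (quadraticChar_one_iff_isSquare hd).mp h1
    have hspecial : g 0 + g (-d) = a * b + a * c := by
      have hnd : (-d : ZMod (4 * k + 3)) ≠ 0 := neg_ne_zero.mpr hd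
      have hg0 : g 0 = (if IsSquare d then b else c) * a := by
        simp [hg, hd]
      have hgd : g (-d) = a * (if IsSquare (-d) then b else c) := by
        simp [hg, hnd]
      rw [hg0, hgd]
      by_cases h : IsSquare d
      · rw [if_pos h, if_neg (hdsq.mp h)]; ring
      · rw [if_neg h, if_pos (by by_contra hne; exact h (hdsq.mpr hne))]; ring
    -- the bulk sum
    have hterm : ∀ u ∈ S, g u
        = b * c + (if (quadraticChar (ZMod (4 * k + 3)) u = 1 ∧ quadraticChar (ZMod (4 * k + 3)) (u + d) = 1) then b * b - b * c else 0)
            + (if (quadraticChar (ZMod (4 * k + 3)) u = -1 ∧ quadraticChar (ZMod (4 * k + 3)) (u + d) = -1) then c * c - b * c else 0) := by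
      intro u hu
      have hu0 : u ≠ 0 := by
        have := Finset.mem_erase.mp (Finset.mem_erase.mp hu).2
        exact this.1
      have hud : u + d ≠ 0 := by
        have h := (Finset.mem_erase.mp hu).1
        intro hcon
        exact h (by linear_combination hcon)
      rw [hg]
      simp only []
      rw [if_neg hud, if_neg hu0]
      have e1 : (if IsSquare u then b else c) = if quadraticChar (ZMod (4 * k + 3)) u = 1 then b else c := by
        by_cases h : IsSquare u
        · rw [if_pos h, if_pos ((quadraticChar_one_iff_isSquare hu0).mpr h)]
        · rw [if_neg h, if_neg (fun hc => h ((quadraticChar_one_iff_isSquare hu0).mp hc))]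
      have e2 : (if IsSquare (u + d) then b else c) = if quadraticChar (ZMod (4 * k + 3)) (u + d) = 1 then b else c := by
        by_cases h : IsSquare (u + d)
        · rw [if_pos h, if_pos ((quadraticChar_one_iff_isSquare hud).mpr h)]
        · rw [if_neg h, if_neg (fun hc => h ((quadraticChar_one_iff_isSquare hud).mp hc))]
      rw [e1, e2]
      rcases quadraticChar_dichotomy hu0 with h1 | h1 <;>
        rcases quadraticChar_dichotomy hud with h2 | h2 <;>
        simp [h1, h2] <;> ring
    -- counts
    have hc1 : ((S.filter (fun u => quadraticChar (ZMod (4 * k + 3)) u = 1 ∧ quadraticChar (ZMod (4 * k + 3)) (u + d) = 1)).card : ℤ) = k := by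
      have := aux_pair_count (F := ZMod (4 * k + 3)) hF hm1 hd (Or.inl rfl)
      rw [hcard, ← hS] at this
      omega
    have hc2 : ((S.filter (fun u => quadraticChar (ZMod (4 * k + 3)) u = -1 ∧ quadraticChar (ZMod (4 * k + 3)) (u + d) = -1)).card : ℤ) = k := by
      have := aux_pair_count (F := ZMod (4 * k + 3)) hF hm1 hd (Or.inr rfl)
      rw [hcard, ← hS] at this
      omega
    have hc1' : (S.filter (fun u => quadraticChar (ZMod (4 * k + 3)) u = 1 ∧ quadraticChar (ZMod (4 * k + 3)) (u + d) = 1)).card = k := by exact_mod_cast hc1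
    have hc2' : (S.filter (fun u => quadraticChar (ZMod (4 * k + 3)) u = -1 ∧ quadraticChar (ZMod (4 * k + 3)) (u + d) = -1)).card = k := by exact_mod_cast hc2
    have hScard : S.card = 4 * k + 1 := by
      rw [hS, Finset.card_erase_of_mem hmd, Finset.card_erase_of_mem (mem_univ _),
        Finset.card_univ, ZMod.card]
      omega
    have hbulk : ∑ u ∈ S, g u
        = (4 * k + 1 : ℕ) • (b * c) + (k : ℕ) • (b * b - b * c) + (k : ℕ) • (c * c - b * c) := by
      rw [Finset.sum_congr rfl hterm, Finset.sum_add_distrib, Finset.sum_add_distrib,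
        Finset.sum_const, Finset.sum_ite, Finset.sum_const, Finset.sum_const_zero, add_zero,
        Finset.sum_ite, Finset.sum_const, Finset.sum_const_zero, add_zero,
        hc1', hc2', hScard]
    have : ∑ u, g u = (g 0 + g (-d)) + ∑ u ∈ S, g u := by
      rw [hsplit]; ring
    rw [this, hspecial, hbulk]
    simp only [nsmul_eq_mul]
    push_cast
    ring

end QcircAux

/-- Gaborit's quadratic residue circulant identity for primes `p = 4k + 3`. -/
theorem qcirc_mul_transpose_of_prime_four_mul_add_three
    {R : Type*} [CommRing R] (k : ℕ)
    (hp : Nat.Prime (4 * k + 3)) (a b c : R) :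
    Qcirc (4 * k + 3) a b c * (Qcirc (4 * k + 3) a b c)ᵀ =
      Qcirc (4 * k + 3)
        (a ^ 2 + (2 * (k : R) + 1) * (b ^ 2 + c ^ 2))
        (a * b + a * c + (k : R) * (b ^ 2 + c ^ 2) + (2 * (k : R) + 1) * (b * c))
        (a * b + a * c + (k : R) * (b ^ 2 + c ^ 2) + (2 * (k : R) + 1) * (b * c)) := by
  ext i j
  rw [Matrix.mul_apply]
  have bridge : ∀ m : ZMod (4 * k + 3),
      Qcirc (4 * k + 3) a b c i m * (Qcirc (4 * k + 3) a b c)ᵀ m j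
        = (if m - i = 0 then a else if IsSquare (m - i) then b else c) *
          (if m - j = 0 then a else if IsSquare (m - j) then b else c) := by
    intro m
    simp only [Qcirc, Matrix.transpose_apply, Matrix.of_apply]
    by_cases h1 : m - i = 0 <;> by_cases h2 : IsSquare (m - i) <;>
      by_cases h3 : m - j = 0 <;> by_cases h4 : IsSquare (m - j) <;>
      simp [h1, h2, h3, h4]
  have reindex : (∑ m : ZMod (4 * k + 3),
        (if m - i = 0 then a else if IsSquare (m - i) then b else c) *
          (if m - j = 0 then a else if IsSquare (m - j) then b else c))
      = ∑ u : ZMod (4 * k + 3),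
        (if u + (j - i) = 0 then a else if IsSquare (u + (j - i)) then b else c) *
          (if u = 0 then a else if IsSquare u then b else c) := by
    refine Fintype.sum_equiv (Equiv.subRight j) _ _ fun u => ?_
    rw [show ((Equiv.subRight j) u : ZMod (4 * k + 3)) = u - j from rfl,
      show u - j + (j - i) = u - i from by ring]
  rw [Finset.sum_congr rfl (fun m _ => bridge m), reindex, aux_key k hp a b c (j - i)]
  simp only [Qcirc, Matrix.of_apply]
  by_cases h1 : j - i = 0 <;> by_cases h2 : IsSquare (j - i) <;> simp [h1, h2]
end
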